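/- For a Hermitian N×N complex matrix Y and any n ≥ 1, Σ_{i,j=1}^N |Y(i,j)|^{2n} ≤ Tr(Y^{2n}). -/

import Mathlib

open Matrix Finset

private lemma conj_pow_aux {N : ℕ} (U D : Matrix (Fin N) (Fin N) ℂ)
    (h : star U * U = 1) (m : ℕ) :
    (U * D * star U) ^ m * U = U * D ^ m := by
  induction m with
  | zero => simp
  | succ k ih =>
      rw [pow_succ, pow_succ, mul_assoc ((U * D * star U) ^ k), mul_assoc (U * D), h,
        mul_one, ← mul_assoc, ih, mul_assoc]

private lemma sum_pow_le_aux {N : ℕ} (f : Fin N → ℝ) (hf : ∀ j, 0 ≤ f j) (n : ℕ) (hn : 1 ≤ n) :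
    ∑ j, f j ^ n ≤ (∑ j, f j) ^ n := by
  obtain ⟨m, rfl⟩ := Nat.exists_eq_add_of_le hn
  have hS : ∀ j, f j ≤ ∑ i, f i := fun j =>
    Finset.single_le_sum (fun i _ => hf i) (Finset.mem_univ j)
  calc ∑ j, f j ^ (1 + m) = ∑ j, f j * f j ^ m := by simp [pow_add]
    _ ≤ ∑ j, f j * (∑ i, f i) ^ m :=
        Finset.sum_le_sum fun j _ =>
          mul_le_mul_of_nonneg_left (pow_le_pow_left₀ (hf j) (hS j) m) (hf j)
    _ = (∑ j, f j) ^ (1 + m) := by rw [← Finset.sum_mul, pow_add, pow_one]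

/-- For a Hermitian `N × N` complex matrix `Y` and any `n ≥ 1`,
`∑_{i,j} |Y(i,j)|^{2n} ≤ Tr(Y^{2n})`. -/
theorem sum_abs_pow_le_trace_pow (N : ℕ) (Y : Matrix (Fin N) (Fin N) ℂ)
    (hY : Y.IsHermitian) (n : ℕ) (hn : 1 ≤ n) :
    ∑ i : Fin N, ∑ j : Fin N, ‖Y i j‖ ^ (2 * n)
      ≤ (Y ^ (2 * n)).trace.re := by
  set U : Matrix (Fin N) (Fin N) ℂ := (hY.eigenvectorUnitary : Matrix (Fin N) (Fin N) ℂ) with hU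
  set μ : Fin N → ℝ := hY.eigenvalues with hμ
  have hsU : star U * U = 1 := by simp [hU]
  have hUs : U * star U = 1 := by simp [hU]
  set D : Matrix (Fin N) (Fin N) ℂ := diagonal (Complex.ofReal ∘ μ) with hD
  have hspec : Y = U * D * star U := hY.spectral_theorem
  have hpow : ∀ m, Y ^ m = U * D ^ m * star U := by
    intro m
    calc Y ^ m = Y ^ m * (U * star U) := by rw [hUs, mul_one]
      _ = ((U * D * star U) ^ m * U) * star U := by rw [← hspec, mul_assoc]
      _ = U * D ^ m * star U := by rw [conj_pow_aux U D hsU m]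
  have hterm : ∀ (i k : Fin N), U i k * star (U i k) = (Complex.normSq (U i k) : ℂ) := by
    intro i k
    rw [Complex.star_def, Complex.mul_conj]
  have hentry : ∀ m i, ((Y ^ m) i i).re = ∑ k, Complex.normSq (U i k) * μ k ^ m := by
    intro m i
    have h1 : (Y ^ m) i i = ∑ k, U i k * (Complex.ofReal (μ k)) ^ m * star (U i k) := by
      rw [hpow m, mul_apply]
      refine Finset.sum_congr rfl fun k _ => ?_
      rw [hD, diagonal_pow, mul_diagonal, Matrix.star_apply]
      simp [Function.comp]
    rw [h1, Complex.re_sum]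
    refine Finset.sum_congr rfl fun k _ => ?_
    rw [mul_comm (U i k), mul_assoc, hterm, ← Complex.ofReal_pow, ← Complex.ofReal_mul,
      mul_comm, Complex.ofReal_re]
  have hcol : ∀ k, ∑ i, Complex.normSq (U i k) = 1 := by
    intro k
    have h := congrFun (congrFun hsU k) k
    simp only [mul_apply, Matrix.star_apply, Matrix.one_apply_eq] at h
    have h2 : (∑ i, (Complex.normSq (U i k) : ℂ)) = 1 := by
      rw [← h]
      exact Finset.sum_congr rfl fun i _ => by rw [mul_comm, hterm]
    exact_mod_cast h2
  have hrow : ∀ i, ∑ k, Complex.normSq (U i k) = 1 := by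
    intro i
    have h := congrFun (congrFun hUs i) i
    simp only [mul_apply, Matrix.star_apply, Matrix.one_apply_eq] at h
    have h2 : (∑ k, (Complex.normSq (U i k) : ℂ)) = 1 := by
      rw [← h]
      exact Finset.sum_congr rfl fun k _ => (hterm i k).symm
    exact_mod_cast h2
  have htr : (Y ^ (2 * n)).trace.re = ∑ k, μ k ^ (2 * n) := by
    rw [Matrix.trace, Complex.re_sum]
    simp_rw [Matrix.diag_apply, hentry (2 * n)]
    rw [Finset.sum_comm]
    exact Finset.sum_congr rfl fun k _ => by rw [← Finset.sum_mul, hcol, one_mul]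
  have habs : ∀ i j, ‖Y i j‖ ^ 2 = (Y i j * Y j i).re := by
    intro i j
    have hc : Y j i = starRingEnd ℂ (Y i j) := by
      have := congrFun (congrFun hY j) i
      simpa [conjTranspose_apply] using this.symm
    rw [hc, Complex.mul_conj, Complex.ofReal_re, Complex.sq_norm]
  have hsq : ∀ i, ∑ j, ‖Y i j‖ ^ 2 = ∑ k, Complex.normSq (U i k) * μ k ^ 2 := by
    intro i
    rw [← hentry 2 i, pow_two, mul_apply, Complex.re_sum]
    exact Finset.sum_congr rfl fun j _ => (habs i j)
  calc ∑ i, ∑ j, ‖Y i j‖ ^ (2 * n)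
      = ∑ i, ∑ j, (‖Y i j‖ ^ 2) ^ n := by simp_rw [← pow_mul]
    _ ≤ ∑ i, (∑ j, ‖Y i j‖ ^ 2) ^ n :=
        Finset.sum_le_sum fun i _ => sum_pow_le_aux _ (fun j => by positivity) n hn
    _ = ∑ i, (∑ k, Complex.normSq (U i k) * μ k ^ 2) ^ n := by simp_rw [hsq]
    _ ≤ ∑ i, ∑ k, Complex.normSq (U i k) * (μ k ^ 2) ^ n :=
        Finset.sum_le_sum fun i _ =>
          Real.pow_arith_mean_le_arith_mean_pow _ _ _
            (fun k _ => Complex.normSq_nonneg _) (hrow i) (fun k _ => sq_nonneg _) n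
    _ = ∑ k, (∑ i, Complex.normSq (U i k)) * μ k ^ (2 * n) := by
        rw [Finset.sum_comm]
        exact Finset.sum_congr rfl fun k _ => by rw [← Finset.sum_mul, ← pow_mul]
    _ = ∑ k, μ k ^ (2 * n) := by simp_rw [hcol, one_mul]
    _ = (Y ^ (2 * n)).trace.re := htr.symm
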